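/- arXiv:1907.11507 — 6 statements merged into one kernel-verified Lean document; each statement's English description precedes it below -/
import Mathlib

section
/- If B is a 2×2 real matrix all of whose entries are positive and n ≥ 1 is an integer, then S = Σ_{k=1}^{n} ((Bᵀ)ᵏ·J − J·Bᵏ) belongs to 𝒜; in particular det S < 0, so S has exactly one positive and one negative eigenvalue and hence signature 0. -/
open Matrix Polynomial

/-- The 2×2 matrix J = [[0,1],[-1,0]]. -/
def matJ : Matrix (Fin 2) (Fin 2) ℝ := !![0, 1; -1, 0]

lemma pow_entries_pos (B : Matrix (Fin 2) (Fin 2) ℝ)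
    (hpos : ∀ i j, 0 < B i j) : ∀ k, 1 ≤ k → ∀ i j, 0 < (B ^ k) i j := by
  intro k hk
  induction k with
  | zero => omega
  | succ m ih =>
    rcases Nat.eq_or_lt_of_le hk with h | h
    · intro i j; simpa [← h] using hpos i j
    · intro i j
      have hm : 1 ≤ m := by omega
      have := ih hm
      rw [pow_succ, Matrix.mul_apply, Fin.sum_univ_two]
      exact add_pos (mul_pos (this i 0) (hpos 0 j)) (mul_pos (this i 1) (hpos 1 j))

lemma term_apply (M : Matrix (Fin 2) (Fin 2) ℝ) :
    (Mᵀ * matJ - matJ * M) = !![-2 * M 1 0, M 0 0 - M 1 1; M 0 0 - M 1 1, 2 * M 0 1] := by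
  ext i j
  fin_cases i <;> fin_cases j <;>
    simp [matJ, Matrix.mul_apply, Matrix.vecMul, dotProduct, Fin.sum_univ_two] <;> ring

/-- If B is a 2×2 real matrix with all entries positive and n ≥ 1, then
S = Σ_{k=1}^{n} ((Bᵀ)ᵏ·J − J·Bᵏ) belongs to 𝒜 (symmetric, negative (1,1) entry,
positive (2,2) entry); in particular det S < 0, so S has exactly one positive and one
negative eigenvalue and hence signature 0. -/
theorem stmt_2 (B : Matrix (Fin 2) (Fin 2) ℝ)
    (hpos : ∀ i j, 0 < B i j) (n : ℕ) (hn : 1 ≤ n) :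
    let S : Matrix (Fin 2) (Fin 2) ℝ := ∑ k ∈ Finset.Icc 1 n, (Bᵀ ^ k * matJ - matJ * B ^ k)
    S.IsSymm ∧ S 0 0 < 0 ∧ 0 < S 1 1 ∧ S.det < 0 ∧
      ∃ lneg lpos : ℝ, lneg < 0 ∧ 0 < lpos ∧
        S.charpoly = (X - C lneg) * (X - C lpos) := by
  intro S
  have hterm : ∀ k, (Bᵀ ^ k * matJ - matJ * B ^ k) =
      !![-2 * (B ^ k) 1 0, (B ^ k) 0 0 - (B ^ k) 1 1;
         (B ^ k) 0 0 - (B ^ k) 1 1, 2 * (B ^ k) 0 1] := by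
    intro k
    rw [← Matrix.transpose_pow]
    exact term_apply (B ^ k)
  have hS : S = !![∑ k ∈ Finset.Icc 1 n, (-2 * (B ^ k) 1 0),
      ∑ k ∈ Finset.Icc 1 n, ((B ^ k) 0 0 - (B ^ k) 1 1);
      ∑ k ∈ Finset.Icc 1 n, ((B ^ k) 0 0 - (B ^ k) 1 1),
      ∑ k ∈ Finset.Icc 1 n, (2 * (B ^ k) 0 1)] := by
    show (∑ k ∈ Finset.Icc 1 n, (Bᵀ ^ k * matJ - matJ * B ^ k)) = _
    ext i j
    rw [Matrix.sum_apply]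
    simp only [hterm]
    fin_cases i <;> fin_cases j <;> simp
  have hne : (Finset.Icc 1 n).Nonempty := by
    exact ⟨1, by simp [hn]⟩
  have hkpos : ∀ k ∈ Finset.Icc 1 n, ∀ i j, 0 < (B ^ k) i j := by
    intro k hk
    exact pow_entries_pos B hpos k (Finset.mem_Icc.mp hk).1
  have ha : 0 < ∑ k ∈ Finset.Icc 1 n, (B ^ k) 1 0 :=
    Finset.sum_pos (fun k hk => hkpos k hk 1 0) hne
  have hc : 0 < ∑ k ∈ Finset.Icc 1 n, (B ^ k) 0 1 :=
    Finset.sum_pos (fun k hk => hkpos k hk 0 1) hne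
  have hS00 : S 0 0 = -2 * ∑ k ∈ Finset.Icc 1 n, (B ^ k) 1 0 := by
    rw [hS]; simp [Finset.mul_sum]
  have hS11 : S 1 1 = 2 * ∑ k ∈ Finset.Icc 1 n, (B ^ k) 0 1 := by
    rw [hS]; simp [Finset.mul_sum]
  have hsymm : S.IsSymm := by
    rw [hS]
    unfold Matrix.IsSymm
    ext i j
    fin_cases i <;> fin_cases j <;> simp
  have hS01 : S 0 1 = S 1 0 := by rw [hS]; simp
  have hdet : S.det < 0 := by
    rw [Matrix.det_fin_two, hS01, hS00, hS11]
    nlinarith [sq_nonneg (S 1 0)]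
  refine ⟨hsymm, by rw [hS00]; linarith, by rw [hS11]; linarith, hdet, ?_⟩
  set t := S.trace with ht
  set d := S.det with hd
  have hlt : t ^ 2 < t ^ 2 - 4 * d := by nlinarith
  set s := Real.sqrt (t ^ 2 - 4 * d) with hs
  have hs2 : s ^ 2 = t ^ 2 - 4 * d := Real.sq_sqrt (by nlinarith [sq_nonneg t])
  have habs : |t| < s := by
    rw [← Real.sqrt_sq_eq_abs]
    exact Real.sqrt_lt_sqrt (sq_nonneg t) hlt
  refine ⟨(t - s) / 2, (t + s) / 2, ?_, ?_, ?_⟩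
  · have := le_abs_self t; linarith
  · have := neg_abs_le t; linarith
  · have htr : S 0 0 + S 1 1 = (t - s) / 2 + (t + s) / 2 := by
      rw [ht, Matrix.trace_fin_two] at *; ring
    have hde : S 0 0 * S 1 1 - S 1 0 * S 1 0 = (t - s) / 2 * ((t + s) / 2) := by
      have : d = S 0 0 * S 1 1 - S 0 1 * S 1 0 := by rw [hd, Matrix.det_fin_two]
      rw [hS01] at this; nlinarith
    rw [Matrix.charpoly, Matrix.det_fin_two]
    simp only [charmatrix_apply_eq, charmatrix_apply_ne _ _ _ (by decide : (0:Fin 2) ≠ 1),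
      charmatrix_apply_ne _ _ _ (by decide : (1:Fin 2) ≠ 0)]
    have expand : ∀ a b c p q : ℝ, a + b = p + q → a * b - c * c = p * q →
        (X - C a) * (X - C b) - -C c * -C c = (X - C p) * (X - C q) := by
      intro a b c p q h1 h2
      have e1 : (X - C a) * (X - C b) - -C c * -C c
          = X ^ 2 - (C a + C b) * X + (C (a * b) - C (c * c)) := by
        simp only [C_mul]; ring
      have e2 : (X - C p) * (X - C q) = X ^ 2 - (C p + C q) * X + C (p * q) := by
        simp only [C_mul]; ring
      rw [e1, e2, ← C_add, ← C_sub, h2, h1, C_add]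
    rw [hS01]
    exact expand (S 0 0) (S 1 1) (S 1 0) ((t - s) / 2) ((t + s) / 2) htr hde
end

section
/- Let A, B, C be Lagrangian subspaces of a finite-dimensional real symplectic vector space (V,Q). Suppose b' ∈ B and a₁ + b' + c₁ = 0 = a₂ + b' + c₂ with a₁, a₂ ∈ A and c₁, c₂ ∈ C. Then for every b ∈ B ∩ (A + C) one has Q(b, c₁) = Q(b, c₂). Hence Wall's pairing Ψ'(b, b') := Q(b, c') is well-defined on B ∩ (C + A), independent of the chosen decomposition of b'. -/
/-- A subspace `L` of a symplectic vector space `(V,Q)` is Lagrangian if `Q` vanishes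
identically on `L × L` and `dim L` is half the dimension of `V`. -/
def IsLagrangian {V : Type*} [AddCommGroup V] [Module ℝ V]
    (Q : V →ₗ[ℝ] V →ₗ[ℝ] ℝ) (L : Submodule ℝ V) : Prop :=
  (∀ x ∈ L, ∀ y ∈ L, Q x y = 0) ∧ 2 * Module.finrank ℝ ↥L = Module.finrank ℝ V

/-- For Lagrangians A, B, C, if b' ∈ B and a₁ + b' + c₁ = 0 = a₂ + b' + c₂
with aᵢ ∈ A, cᵢ ∈ C, then Q(b,c₁) = Q(b,c₂) for every b ∈ B ∩ (A + C); hence Wall's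
pairing Ψ'(b,b') = Q(b,c') is well-defined on B ∩ (C + A). -/
theorem stmt_7 {V : Type*} [AddCommGroup V] [Module ℝ V] [FiniteDimensional ℝ V]
    (Q : V →ₗ[ℝ] V →ₗ[ℝ] ℝ)
    (hAlt : ∀ x, Q x x = 0)
    (hNd : ∀ x, (∀ y, Q x y = 0) → x = 0)
    (A B C : Submodule ℝ V)
    (hA : IsLagrangian Q A) (hB : IsLagrangian Q B) (hC : IsLagrangian Q C)
    (b' a₁ a₂ c₁ c₂ : V)
    (hb' : b' ∈ B) (ha₁ : a₁ ∈ A) (ha₂ : a₂ ∈ A) (hc₁ : c₁ ∈ C) (hc₂ : c₂ ∈ C)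
    (h1 : a₁ + b' + c₁ = 0) (h2 : a₂ + b' + c₂ = 0) :
    ∀ b ∈ B ⊓ (A ⊔ C), Q b c₁ = Q b c₂ := by
  intro b hb
  obtain ⟨hbB, hbAC⟩ := hb
  rw [SetLike.mem_coe, Submodule.mem_sup] at hbAC
  obtain ⟨a, haA, c, hcC, rfl⟩ := hbAC
  have hd : c₁ - c₂ = a₂ - a₁ := by linear_combination (norm := abel) h1 - h2
  have key : Q (a + c) (c₁ - c₂) = 0 := by
    have h1' : Q a (c₁ - c₂) = 0 := by
      rw [hd, map_sub]; simp [hA.1 a haA a₂ ha₂, hA.1 a haA a₁ ha₁]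
    have h2' : Q c (c₁ - c₂) = 0 := by
      rw [map_sub]; simp [hC.1 c hcC c₁ hc₁, hC.1 c hcC c₂ hc₂]
    simp [map_add, map_sub] at *
    linarith
  rw [map_sub] at key
  linarith [key]
end

section
/- Let A, B, C be Lagrangian subspaces of a finite-dimensional real symplectic vector space (V,Q). If a₁ + b₁ + c₁ = 0 and a₂ + b₂ + c₂ = 0 with a₁, a₂ ∈ A, b₁, b₂ ∈ B, c₁, c₂ ∈ C, then Q(b₁, c₂) = Q(b₂, c₁); that is, Wall's pairing Ψ' on B ∩ (C + A) is symmetric. -/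
/-- For Lagrangians A, B, C, if a₁ + b₁ + c₁ = 0 and a₂ + b₂ + c₂ = 0 with
aᵢ ∈ A, bᵢ ∈ B, cᵢ ∈ C, then Q(b₁,c₂) = Q(b₂,c₁); i.e. Wall's pairing Ψ' on
B ∩ (C + A) is symmetric. -/
theorem stmt_8 {V : Type*} [AddCommGroup V] [Module ℝ V] [FiniteDimensional ℝ V]
    (Q : V →ₗ[ℝ] V →ₗ[ℝ] ℝ)
    (hAlt : ∀ x, Q x x = 0)
    (hNd : ∀ x, (∀ y, Q x y = 0) → x = 0)
    (A B C : Submodule ℝ V)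
    (hA : IsLagrangian Q A) (hB : IsLagrangian Q B) (hC : IsLagrangian Q C)
    (a₁ a₂ b₁ b₂ c₁ c₂ : V)
    (ha₁ : a₁ ∈ A) (ha₂ : a₂ ∈ A) (hb₁ : b₁ ∈ B) (hb₂ : b₂ ∈ B)
    (hc₁ : c₁ ∈ C) (hc₂ : c₂ ∈ C)
    (h1 : a₁ + b₁ + c₁ = 0) (h2 : a₂ + b₂ + c₂ = 0) :
    Q b₁ c₂ = Q b₂ c₁ := by
  have skew : ∀ x y, Q x y + Q y x = 0 := by
    intro x y
    have h := hAlt (x + y)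
    simp only [map_add, LinearMap.add_apply, hAlt] at h
    linarith
  have e1 : Q a₁ c₂ + Q b₁ c₂ + Q c₁ c₂ = 0 := by
    have := congrArg (fun v => Q v c₂) h1
    simpa [map_add] using this
  have e2 : Q a₂ c₁ + Q b₂ c₁ + Q c₂ c₁ = 0 := by
    have := congrArg (fun v => Q v c₁) h2
    simpa [map_add] using this
  have e3 : Q a₁ a₂ + Q a₁ b₂ + Q a₁ c₂ = 0 := by
    have := congrArg (fun v => Q a₁ v) h2
    simpa [map_add] using this
  have e4 : Q a₁ b₂ + Q b₁ b₂ + Q c₁ b₂ = 0 := by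
    have := congrArg (fun v => Q v b₂) h1
    simpa [map_add] using this
  have hCC := hC.1 c₁ hc₁ c₂ hc₂
  have hCC' := hC.1 c₂ hc₂ c₁ hc₁
  have hAA := hA.1 a₁ ha₁ a₂ ha₂
  have hBB := hB.1 b₁ hb₁ b₂ hb₂
  have s1 := skew c₁ b₂
  have s2 := skew a₂ c₁
  linarith
end

section
/- Let A, B, C be Lagrangian subspaces of a finite-dimensional real symplectic vector space (V,Q). If b ∈ B ∩ (C + A) and b' ∈ (B ∩ C) + (B ∩ A), then for any decomposition a' + b' + c' = 0 with a' ∈ A and c' ∈ C one has Q(b, c') = 0. Hence Wall's pairing Ψ' descends to a symmetric bilinear form Ψ on the quotient W = (B ∩ (C + A)) / ((B ∩ C) + (B ∩ A)). -/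
/-- For Lagrangians A, B, C, if b ∈ B ∩ (C + A) and
b' ∈ (B ∩ C) + (B ∩ A), then for any decomposition a' + b' + c' = 0 with a' ∈ A and
c' ∈ C one has Q(b,c') = 0; hence Wall's pairing Ψ' descends to a symmetric bilinear
form Ψ on the quotient W = (B ∩ (C + A)) / ((B ∩ C) + (B ∩ A)). -/
theorem stmt_9 {V : Type*} [AddCommGroup V] [Module ℝ V] [FiniteDimensional ℝ V]
    (Q : V →ₗ[ℝ] V →ₗ[ℝ] ℝ)
    (hAlt : ∀ x, Q x x = 0)
    (hNd : ∀ x, (∀ y, Q x y = 0) → x = 0)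
    (A B C : Submodule ℝ V)
    (hA : IsLagrangian Q A) (hB : IsLagrangian Q B) (hC : IsLagrangian Q C)
    (b : V) (hb : b ∈ B ⊓ (C ⊔ A))
    (b' : V) (hb' : b' ∈ (B ⊓ C) ⊔ (B ⊓ A))
    (a' c' : V) (ha' : a' ∈ A) (hc' : c' ∈ C)
    (hsum : a' + b' + c' = 0) :
    Q b c' = 0 := by
  obtain ⟨hbB, hbCA⟩ := hb
  obtain ⟨c, hc, a, ha, hca⟩ := Submodule.mem_sup.mp hbCA
  obtain ⟨bc, hbc, ba, hba, hb'eq⟩ := Submodule.mem_sup.mp hb'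
  have hc'eq : c' = -a' - b' := by
    have h : c' + (a' + b') = 0 := by rw [← hsum]; abel
    rw [eq_neg_of_add_eq_zero_left h]; abel
  have h1 : Q c c' = 0 := hC.1 c hc c' hc'
  have h2 : Q a a' = 0 := hA.1 a ha a' ha'
  have h3 : Q a ba = 0 := hA.1 a ha ba hba.2
  have h4 : Q b bc = 0 := hB.1 b hbB bc hbc.1
  have h5 : Q c bc = 0 := hC.1 c hc bc hbc.2
  have h6 : Q a bc = 0 := by
    have : a = b - c := by rw [← hca]; abel
    rw [this, map_sub, LinearMap.sub_apply, h4, h5, sub_zero]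
  have key : Q b c' = Q a c' := by
    rw [← hca, map_add, LinearMap.add_apply, h1, zero_add]
  rw [key, hc'eq, ← hb'eq]
  simp only [map_add, map_neg, map_sub, LinearMap.add_apply, LinearMap.neg_apply,
    LinearMap.sub_apply, h2, h3, h6]
  ring_nf
end

section
/- Let A, B, C be Lagrangian subspaces of a finite-dimensional real symplectic vector space (V,Q). Suppose b ∈ B ∩ (C + A) satisfies Q(b, c') = 0 for every b' ∈ B ∩ (C + A) and every decomposition a' + b' + c' = 0 with a' ∈ A, c' ∈ C. Then b ∈ (B ∩ C) + (B ∩ A). In other words, the induced symmetric bilinear form Ψ on W = (B ∩ (C + A)) / ((B ∩ C) + (B ∩ A)) is nondegenerate. -/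
section WallAux
open LinearMap Module


section Aux
variable {V : Type*} [AddCommGroup V] [Module ℝ V] [FiniteDimensional ℝ V]

lemma orth_sup (Q : LinearMap.BilinForm ℝ V) (X Y : Submodule ℝ V) :
    LinearMap.BilinForm.orthogonal Q (X ⊔ Y) = LinearMap.BilinForm.orthogonal Q X ⊓ LinearMap.BilinForm.orthogonal Q Y := by
  apply le_antisymm
  · exact le_inf (Q.orthogonal_le le_sup_left) (Q.orthogonal_le le_sup_right)
  · rintro x ⟨hx1, hx2⟩ n hn
    obtain ⟨y, hy, z, hz, rfl⟩ := Submodule.mem_sup.mp hn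
    show Q (y + z) x = 0
    rw [map_add, LinearMap.add_apply, hx1 y hy, hx2 z hz, add_zero]

lemma orth_inf (Q : LinearMap.BilinForm ℝ V) (hNd : Q.Nondegenerate) (hR : Q.IsRefl)
    (X Y : Submodule ℝ V) :
    LinearMap.BilinForm.orthogonal Q (X ⊓ Y) = LinearMap.BilinForm.orthogonal Q X ⊔ LinearMap.BilinForm.orthogonal Q Y := by
  conv_lhs => rw [← Q.orthogonal_orthogonal hNd hR X, ← Q.orthogonal_orthogonal hNd hR Y,
    ← orth_sup]
  rw [Q.orthogonal_orthogonal hNd hR]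



lemma lagr_orth (Q : LinearMap.BilinForm ℝ V) (hNd : Q.Nondegenerate) (hR : Q.IsRefl)
    (L : Submodule ℝ V)
    (hI : ∀ x ∈ L, ∀ y ∈ L, Q x y = 0) (hd : 2 * finrank ℝ ↥L = finrank ℝ V) :
    LinearMap.BilinForm.orthogonal Q L = L := by
  have h1 : L ≤ LinearMap.BilinForm.orthogonal Q L := fun x hx y hy => hI y hy x hx
  have h2 : finrank ℝ (LinearMap.BilinForm.orthogonal Q L) = finrank ℝ V - finrank ℝ L :=
    LinearMap.BilinForm.finrank_orthogonal hNd L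
  have h3 : finrank ℝ L ≤ finrank ℝ V := Submodule.finrank_le L
  exact (Submodule.eq_of_le_of_finrank_le h1 (by omega)).symm

end Aux


end WallAux

/-- For Lagrangians A, B, C, if b ∈ B ∩ (C + A) pairs to zero (via Wall's
pairing) with every b' ∈ B ∩ (C + A) along every decomposition a' + b' + c' = 0 with
a' ∈ A, c' ∈ C, then b ∈ (B ∩ C) + (B ∩ A); i.e. the induced symmetric bilinear form Ψ
on W = (B ∩ (C + A)) / ((B ∩ C) + (B ∩ A)) is nondegenerate. -/

theorem stmt_10 {V : Type*} [AddCommGroup V] [Module ℝ V] [FiniteDimensional ℝ V]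
    (Q : V →ₗ[ℝ] V →ₗ[ℝ] ℝ)
    (hAlt : ∀ x, Q x x = 0)
    (hNd : ∀ x, (∀ y, Q x y = 0) → x = 0)
    (A B C : Submodule ℝ V)
    (hA : IsLagrangian Q A) (hB : IsLagrangian Q B) (hC : IsLagrangian Q C)
    (b : V) (hb : b ∈ B ⊓ (C ⊔ A))
    (hvanish : ∀ b' ∈ B ⊓ (C ⊔ A), ∀ a' ∈ A, ∀ c' ∈ C, a' + b' + c' = 0 → Q b c' = 0) :
    b ∈ (B ⊓ C) ⊔ (B ⊓ A) := by
  have hR : Q.IsRefl := LinearMap.IsAlt.isRefl hAlt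
  have hNdQ : LinearMap.BilinForm.Nondegenerate Q := hR.nondegenerate_iff_separatingLeft.mpr hNd
  have hOA : LinearMap.BilinForm.orthogonal Q A = A := lagr_orth Q hNdQ hR A hA.1 hA.2
  have hOB : LinearMap.BilinForm.orthogonal Q B = B := lagr_orth Q hNdQ hR B hB.1 hB.2
  have hOC : LinearMap.BilinForm.orthogonal Q C = C := lagr_orth Q hNdQ hR C hC.1 hC.2
  -- b is orthogonal to B ⊔ (C ⊓ (A ⊔ B))
  have hkey : b ∈ LinearMap.BilinForm.orthogonal Q (B ⊔ (C ⊓ (A ⊔ B))) := by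
    rw [orth_sup]
    refine ⟨?_, ?_⟩
    · rw [hOB]; exact hb.1
    · rintro y ⟨hyC, hyAB⟩
      obtain ⟨a, ha, b2, hb2, hab⟩ := Submodule.mem_sup.mp hyAB
      have hdec : (-a) + (-b2) + y = 0 := by rw [← hab]; abel
      have hb' : -b2 ∈ B ⊓ (C ⊔ A) := by
        refine ⟨neg_mem hb2, ?_⟩
        have : -b2 = -y + a := by rw [← hab]; abel
        rw [this]
        exact add_mem (Submodule.mem_sup_left (neg_mem hyC)) (Submodule.mem_sup_right ha)
      have := hvanish (-b2) hb' (-a) (neg_mem ha) y hyC hdec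
      exact hR b y this
  rw [orth_sup, hOB, orth_inf Q hNdQ hR, hOC, orth_sup, hOA, hOB] at hkey
  -- hkey : b ∈ B ⊓ (C ⊔ A ⊓ B)
  obtain ⟨hbB, hbCAB⟩ := hkey
  obtain ⟨c, hc, d, hd, hcd⟩ := Submodule.mem_sup.mp hbCAB
  have hcB : c ∈ B := by
    have : c = b - d := by rw [← hcd]; abel
    rw [this]; exact sub_mem hbB hd.2
  rw [← hcd]
  exact Submodule.add_mem_sup ⟨hcB, hc⟩ ⟨hd.2, hd.1⟩
end

section
/- Let (V,Q) be a finite-dimensional real symplectic vector space, φ : V → V a symplectic map, and m ≥ 1 an integer. If z₁ ∈ V satisfies φ^{m+1}(z₁) = z₁, then I_{φ,m}(z₁, z₂) = 0 for all z₂ ∈ V. Hence I_{φ,m} descends to a well-defined symmetric bilinear pairing on the quotient V / ker(φ^{m+1} − id). -/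
/-- For a symplectic map φ of a finite-dimensional real symplectic vector
space (V,Q) and m ≥ 1, if φ^{m+1}(z₁) = z₁ then I_{φ,m}(z₁,z₂) = 0 for all z₂ (and, by
symmetry, I_{φ,m}(z₂,z₁) = 0); hence I_{φ,m} descends to a well-defined symmetric
bilinear pairing on V / ker(φ^{m+1} − id). -/
theorem stmt_13 {V : Type*} [AddCommGroup V] [Module ℝ V] [FiniteDimensional ℝ V]
    (Q : V →ₗ[ℝ] V →ₗ[ℝ] ℝ)
    (hAlt : ∀ x, Q x x = 0)
    (hNd : ∀ x, (∀ y, Q x y = 0) → x = 0)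
    (φ : V →ₗ[ℝ] V) (hφ : ∀ x y, Q (φ x) (φ y) = Q x y)
    (m : ℕ) (hm : 1 ≤ m)
    (z₁ : V) (hfix : (φ ^ (m + 1)) z₁ = z₁) :
    ∀ z₂ : V,
      (∑ i ∈ Finset.Icc 1 m, Q ((φ ^ i) z₁) z₂) -
          (∑ i ∈ Finset.Icc 1 m, Q z₁ ((φ ^ i) z₂)) = 0 ∧
      (∑ i ∈ Finset.Icc 1 m, Q ((φ ^ i) z₂) z₁) -
          (∑ i ∈ Finset.Icc 1 m, Q z₂ ((φ ^ i) z₁)) = 0 := by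
  intro z₂
  -- Q is invariant under all powers of φ
  have hpow : ∀ (k : ℕ) (x y : V), Q ((φ ^ k) x) ((φ ^ k) y) = Q x y := by
    intro k
    induction k with
    | zero => simp
    | succ n ih =>
      intro x y
      have : φ ^ (n + 1) = φ ^ n * φ := pow_succ φ n
      rw [this]
      simp only [Module.End.mul_apply]
      rw [ih (φ x) (φ y), hφ]
  -- key: for i ∈ [1,m], Q z₁ (φ^i z₂) = Q (φ^(m+1-i) z₁) z₂
  have key : ∀ i ∈ Finset.Icc 1 m, Q z₁ ((φ ^ i) z₂) = Q ((φ ^ (m + 1 - i)) z₁) z₂ := by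
    intro i hi
    simp only [Finset.mem_Icc] at hi
    have hsum : i + (m + 1 - i) = m + 1 := by omega
    have h1 : (φ ^ i) ((φ ^ (m + 1 - i)) z₁) = z₁ := by
      have : (φ ^ i) ((φ ^ (m + 1 - i)) z₁) = (φ ^ (i + (m + 1 - i))) z₁ := by
        rw [pow_add]; rfl
      rw [this, hsum, hfix]
    calc Q z₁ ((φ ^ i) z₂)
        = Q ((φ ^ i) ((φ ^ (m + 1 - i)) z₁)) ((φ ^ i) z₂) := by rw [h1]
      _ = Q ((φ ^ (m + 1 - i)) z₁) z₂ := hpow i _ _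
  have key2 : ∀ i ∈ Finset.Icc 1 m, Q ((φ ^ i) z₂) z₁ = Q z₂ ((φ ^ (m + 1 - i)) z₁) := by
    intro i hi
    simp only [Finset.mem_Icc] at hi
    have hsum : i + (m + 1 - i) = m + 1 := by omega
    have h1 : (φ ^ i) ((φ ^ (m + 1 - i)) z₁) = z₁ := by
      have : (φ ^ i) ((φ ^ (m + 1 - i)) z₁) = (φ ^ (i + (m + 1 - i))) z₁ := by
        rw [pow_add]; rfl
      rw [this, hsum, hfix]
    calc Q ((φ ^ i) z₂) z₁
        = Q ((φ ^ i) z₂) ((φ ^ i) ((φ ^ (m + 1 - i)) z₁)) := by rw [h1]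
      _ = Q z₂ ((φ ^ (m + 1 - i)) z₁) := hpow i _ _
  -- reindexing bijection i ↦ m+1-i on Icc 1 m
  have reindex : ∀ (f : ℕ → ℝ),
      ∑ i ∈ Finset.Icc 1 m, f (m + 1 - i) = ∑ i ∈ Finset.Icc 1 m, f i := by
    intro f
    apply Finset.sum_nbij' (fun i => m + 1 - i) (fun i => m + 1 - i) <;> intros <;>
      first
        | rfl
        | (simp only [Finset.mem_Icc] at *; omega)
  constructor
  · rw [Finset.sum_congr rfl key,
      reindex (fun j => Q ((φ ^ j) z₁) z₂)]
    ring
  · rw [Finset.sum_congr rfl key2,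
      reindex (fun j => Q z₂ ((φ ^ j) z₁))]
    ring
end
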